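/- For the lower triangular matrix L_m, the sum of the entries in column j equals the sum of the entries in column j-1 minus C(m+1, m-j+1) p^{m-j+1} q^{j}, for 1 ≤ j ≤ m. -/

import Mathlib

open Finset

lemma key_lemma (p : ℝ) (j : ℕ) (hj : 1 ≤ j) : ∀ n : ℕ,
    (1 - p) * ∑ k ∈ range (n + 1), ((k + j).choose k : ℝ) * p ^ k
      = ∑ k ∈ range (n + 2), ((k + j - 1).choose k : ℝ) * p ^ k
        - ((n + j + 1).choose (n + 1) : ℝ) * p ^ (n + 1) := by
  intro n
  induction n with
  | zero =>
    simp [Finset.sum_range_succ]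
    ring
  | succ n ih =>
    rw [Finset.sum_range_succ, Finset.sum_range_succ (n := n + 2)]
    rw [mul_add, ih]
    have pascal : ((n + j + 2).choose (n + 2) : ℝ)
        = ((n + j + 1).choose (n + 1) : ℝ) + ((n + j + 1).choose (n + 2) : ℝ) := by
      have := Nat.succ_sub_one (n + j + 2)
      have h : (n + j + 2).choose (n + 2) = (n + j + 1).choose (n + 1) + (n + j + 1).choose (n + 2) :=
        Nat.choose_succ_succ' (n + j + 1) (n + 1) ▸ by
          rw [Nat.choose_succ_succ (n + j + 1) (n + 1)]
      exact_mod_cast h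
    have e1 : n + 2 + j - 1 = n + j + 1 := by omega
    have e2 : n + 1 + j = n + j + 1 := by omega
    rw [e1, e2, show n + j + 1 + 1 = n + j + 2 from rfl,
      show n + 1 + 1 = n + 2 from rfl, pascal]
    ring

theorem Lm_column_sum_recurrence (p : ℝ) (hp : p ∈ Set.Ioo (0:ℝ) 1) (q : ℝ) (hq : q = 1 - p)
    (m : ℕ) (hm : 1 ≤ m)
    (L : ℕ → ℕ → ℝ)
    (hL : ∀ i j, L i j = if j ≤ i then (i.choose (i - j) : ℝ) * p ^ (i - j) * q ^ (j + 1) else 0)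
    (j : ℕ) (hj1 : 1 ≤ j) (hjm : j ≤ m) :
    ∑ i ∈ range (m + 1), L i j
      = ∑ i ∈ range (m + 1), L i (j - 1)
        - ((m + 1).choose (m - j + 1) : ℝ) * p ^ (m - j + 1) * q ^ j := by
  subst hq
  have col : ∀ c : ℕ, c ≤ m → ∑ i ∈ range (m + 1), L i c
      = (1 - p) ^ (c + 1) * ∑ k ∈ range (m - c + 1), ((k + c).choose k : ℝ) * p ^ k := by
    intro c hc
    rw [range_eq_Ico, ← Finset.sum_Ico_consecutive _ (Nat.zero_le c) (by omega : c ≤ m + 1)]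
    have h0 : ∑ i ∈ Finset.Ico 0 c, L i c = 0 := by
      apply Finset.sum_eq_zero
      intro i hi
      rw [hL]
      rw [Finset.mem_Ico] at hi
      rw [if_neg (by omega)]
    rw [h0, zero_add, Finset.sum_Ico_eq_sum_range]
    have hrange : m + 1 - c = m - c + 1 := by omega
    rw [hrange, Finset.mul_sum]
    apply Finset.sum_congr rfl
    intro k _
    rw [hL, if_pos (by omega : c ≤ c + k)]
    have : c + k - c = k := by omega
    rw [this]
    rw [Nat.add_comm c k]
    ring
  rw [col j hjm, col (j - 1) (by omega)]
  set n := m - j with hn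
  have e1 : m - (j - 1) + 1 = n + 2 := by omega
  have e2 : m + 1 = n + j + 1 := by omega
  have e3 : m - j + 1 = n + 1 := by omega
  have e4 : ∀ k, (k + (j - 1)).choose k = (k + j - 1).choose k := by
    intro k; congr 1; omega
  have key := key_lemma p j hj1 n
  rw [e1, e2, e3]
  have hsum : ∑ k ∈ range (n + 2), ((k + (j - 1)).choose k : ℝ) * p ^ k
      = ∑ k ∈ range (n + 2), ((k + j - 1).choose k : ℝ) * p ^ k := by
    apply Finset.sum_congr rfl; intro k _; rw [e4]
  rw [hsum]
  have hq' : (1 - p) ^ (j - 1 + 1) = (1 - p) ^ j := by congr 1; omega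
  rw [hq']
  have expand : (1 - p) ^ (j + 1) = (1 - p) ^ j * (1 - p) := by ring
  rw [expand]
  calc (1 - p) ^ j * (1 - p) * ∑ k ∈ range (n + 1), ((k + j).choose k : ℝ) * p ^ k
      = (1 - p) ^ j * ((1 - p) * ∑ k ∈ range (n + 1), ((k + j).choose k : ℝ) * p ^ k) := by ring
    _ = (1 - p) ^ j * (∑ k ∈ range (n + 2), ((k + j - 1).choose k : ℝ) * p ^ k
        - ((n + j + 1).choose (n + 1) : ℝ) * p ^ (n + 1)) := by rw [key]
    _ = _ := by ring
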